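/- Let A be an anti-commutative algebra over a field F. Then A is a CB-algebra if and only if A is anti-associative, i.e., (x·y)·z = -x·(y·z) for all x, y, z ∈ A. -/
import Mathlib


/-- An anti-commutative algebra is a CB-algebra iff it is anti-associative. -/
theorem stmt_0 (F : Type*) [Field F] (A : Type*) [AddCommGroup A] [Module F A]
    (mul : A →ₗ[F] A →ₗ[F] A)
    (hac : ∀ x : A, mul x x = 0) :
    (∀ x y : A, mul x y = 0 → ∀ z : A, mul (mul x z) y = 0) ↔
      (∀ x y z : A, mul (mul x y) z = - mul x (mul y z)) := by
  have hskew : ∀ x y : A, mul x y = - mul y x := by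
    intro x y
    have h := hac (x + y)
    simp only [map_add, LinearMap.add_apply, hac] at h
    have h' : mul x y + mul y x = 0 := by
      rw [← h]; abel
    exact eq_neg_of_add_eq_zero_left h'
  constructor
  · intro h x y z
    have key : ∀ a b c : A, mul (mul a c) b = - mul (mul b c) a := by
      intro a b c
      have h0 : ∀ a c : A, mul (mul a c) a = 0 := fun a c => h a a (hac a) c
      have hab := h0 (a + b) c
      simp only [map_add, LinearMap.add_apply] at hab
      have h' : mul (mul a c) b + mul (mul b c) a = 0 := by
        have := h0 a c
        have := h0 b c
        rw [← hab]; rw [h0 a c, h0 b c]; abel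
      exact eq_neg_of_add_eq_zero_left h'
    calc mul (mul x y) z = - mul (mul z y) x := key x z y
      _ = mul (mul y z) x := by rw [hskew z y]; simp
      _ = - mul x (mul y z) := by rw [hskew (mul y z) x]
  · intro h x y hxy z
    have h1 : mul (mul x z) y = - mul x (mul z y) := h x z y
    rw [h1, hskew x (mul z y), h z y x, hskew y x, hxy]
    simp
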